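/- Let n and a be positive integers, b = gcd(n, a), and let F(q) = ∑_{d∣n} μ(d) · ∏_{j=1}^{n/d} (1 + q^{jd} + q^{2jd} + ⋯ + q^{(a−1)jd}) ∈ ℤ[q]. If s is an integer with 1 ≤ s ≤ nb and b does not divide s, then F(ζ_{nb}^s) = 0, where ζ_{nb} = e^{2πi/(nb)}. -/

import Mathlib

open Polynomial ArithmeticFunction Finset Complex

/-- Let `F(q) = ∑_{d∣n} μ(d) ∏_{j=1}^{n/d} (1 + q^{jd} + ⋯ + q^{(a−1)jd}) ∈ ℤ[q]` and
`b = gcd(n,a)`. If `1 ≤ s ≤ nb` and `b ∤ s`, then `F(ζ_{nb}^s) = 0`. -/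
theorem F_vanishes_at_nondiv (n a : ℕ) (hn : 0 < n) (ha : 0 < a)
    (s : ℕ) (hs1 : 1 ≤ s) (hs2 : s ≤ n * Nat.gcd n a) (hbs : ¬ Nat.gcd n a ∣ s) :
    Polynomial.aeval (Complex.exp (2 * Real.pi * Complex.I / (n * Nat.gcd n a)) ^ s)
      (∑ d ∈ n.divisors, Polynomial.C ((moebius d : ℤ)) *
        ∏ j ∈ Finset.Icc 1 (n / d),
          ∑ k ∈ Finset.range a, (Polynomial.X : Polynomial ℤ) ^ (k * j * d)) = 0 := by
  set b := Nat.gcd n a with hb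
  have hbpos : 0 < b := Nat.gcd_pos_of_pos_left a hn
  have hba : b ∣ a := Nat.gcd_dvd_right n a
  set w : ℂ := Complex.exp (2 * Real.pi * Complex.I / (n * b)) with hw
  have hNne : ((n : ℂ) * (b : ℂ)) ≠ 0 := by
    apply mul_ne_zero <;> exact_mod_cast (by omega : ¬ _ = 0)
  have hwpow : ∀ m : ℕ, w ^ m = Complex.exp ((m : ℂ) * (2 * Real.pi * Complex.I) / ((n : ℂ) * b)) := by
    intro m
    rw [hw, ← Complex.exp_nat_mul]
    ring_nf
  have hz1 : (w ^ (s * n)) ^ a = 1 := by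
    obtain ⟨c, hc⟩ := hba
    rw [← pow_mul, hwpow]
    have : ((s * n * a : ℕ) : ℂ) * (2 * Real.pi * Complex.I) / ((n : ℂ) * b)
        = (s * c : ℕ) * (2 * Real.pi * Complex.I) := by
      field_simp
      push_cast [hc]
      rw [div_eq_iff hNne]
      ring
    rw [this]
    have := Complex.exp_int_mul_two_pi_mul_I ((s * c : ℕ) : ℤ)
    push_cast at this ⊢
    rw [this]
  have hz2 : w ^ (s * n) ≠ 1 := by
    intro h
    rw [hwpow, Complex.exp_eq_one_iff] at h
    obtain ⟨m, hm⟩ := h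
    have h2 : (2 : ℂ) * Real.pi * Complex.I ≠ 0 := by
      simp [Real.pi_ne_zero, Complex.I_ne_zero]
    have hm' : ((s * n : ℕ) : ℂ) * (2 * Real.pi * Complex.I)
        = (m : ℂ) * (2 * Real.pi * Complex.I) * ((n : ℂ) * b) := (div_eq_iff hNne).mp hm
    have hmn : ((s * n : ℕ) : ℂ) = m * ((n : ℂ) * b) := by
      apply mul_right_cancel₀ h2
      linear_combination hm'
    have hnz : (s * n : ℤ) = m * (n * b) := by exact_mod_cast hmn
    apply hbs
    have hns : (s : ℤ) = m * b := by
      have hn' : (n : ℤ) ≠ 0 := by exact_mod_cast hn.ne'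
      have : (s : ℤ) * n = m * b * n := by linarith [hnz]
      exact mul_right_cancel₀ hn' this
    have : (b : ℤ) ∣ (s : ℤ) := ⟨m, by rw [hns]; ring⟩
    exact_mod_cast this
  rw [map_sum]
  refine Finset.sum_eq_zero fun d hd => ?_
  rw [Nat.mem_divisors] at hd
  rw [map_mul, map_prod]
  apply mul_eq_zero_of_right
  refine Finset.prod_eq_zero (i := n / d) ?_ ?_
  · have hdpos : 0 < d := Nat.pos_of_dvd_of_pos hd.1 hn
    have : 0 < n / d := Nat.div_pos (Nat.le_of_dvd hn hd.1) hdpos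
    simp [Finset.mem_Icc]
    omega
  · rw [map_sum]
    have hnd : n / d * d = n := Nat.div_mul_cancel hd.1
    have hk : ∀ k ∈ Finset.range a,
        Polynomial.aeval (w ^ s) ((Polynomial.X : Polynomial ℤ) ^ (k * (n / d) * d))
          = (w ^ (s * n)) ^ k := by
      intro k _
      rw [map_pow, Polynomial.aeval_X, ← pow_mul, ← pow_mul]
      congr 1
      rw [mul_assoc, hnd]
      ring
    rw [Finset.sum_congr rfl hk, geom_sum_eq hz2, hz1]
    simp
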